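/- Let d, e, f be positive natural numbers and let t : Fin d → Fin e → ℚ and u : Fin d → Fin f → ℚ be families of rational numbers (the evaluated terms of a formula in conjunctive normal form with order inequalities). Then the conjunction ∀ i : Fin d, ((∃ j : Fin e, t i j = 0) ∨ (∃ k : Fin f, u i k > 0)) holds if and only if there exists v : Fin d → Fin 3 → ℚ such that, writing V i = (v i 0)^2 + (v i 1)^2 + (v i 2)^2, one has ∑_{i : Fin d} ((∏_{j : Fin e} t i j) · (∏_{k : Fin f} (1 − (u i k)·(V i)) · (1 − 2·(u i k)·(V i))))^2 = 0. -/

import Mathlib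

open scoped NumberTheorySymbols

/-- Squarefree m ≥ 2 is not a perfect square. -/
lemma sf_not_sq {m : ℕ} (hm : Squarefree m) (h2 : 2 ≤ m) (k : ℤ) : k ^ 2 ≠ (m : ℤ) := by
  intro h
  have hk : k.natAbs ^ 2 = m := by
    have := congrArg Int.natAbs h
    simpa [Int.natAbs_pow] using this
  have h1 : IsUnit k.natAbs := hm k.natAbs (by rw [← hk]; ring_nf; exact dvd_rfl)
  have h2' : k.natAbs = 1 := Nat.isUnit_iff.mp h1
  rw [h2', one_pow] at hk
  omega

lemma pm_not_sq {m p : ℕ} (hp : p.Prime) (hpm : ¬ p ∣ m) (k : ℤ) : k ^ 2 ≠ ((p * m : ℕ) : ℤ) := by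
  intro h
  have hk : k.natAbs ^ 2 = p * m := by
    have := congrArg Int.natAbs h
    simpa [Int.natAbs_pow, Int.natAbs_mul] using this
  have hpk : p ∣ k.natAbs := hp.dvd_of_dvd_pow (n := 2) (by rw [hk]; exact dvd_mul_right _ _)
  obtain ⟨c, hc⟩ := hpk
  rw [hc] at hk
  have hp0 : 0 < p := hp.pos
  have : p * c ^ 2 = m := by nlinarith [hk]
  exact hpm ⟨c ^ 2, this.symm⟩

lemma p_not_sq {p : ℕ} (hp : p.Prime) (k : ℤ) : k ^ 2 ≠ (p : ℤ) := by
  intro h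
  have hk : k.natAbs ^ 2 = p := by
    have := congrArg Int.natAbs h
    simpa [Int.natAbs_pow] using this
  have hdvd : k.natAbs ∣ p := ⟨k.natAbs, by rw [← hk]; ring⟩
  rcases hp.eq_one_or_self_of_dvd _ hdvd with h1 | h1 <;> rw [h1] at hk <;>
    nlinarith [hp.two_le]


lemma key_pigeonhole (m p : ℕ) (hm2 : 2 ≤ m) (hmsf : Squarefree m)
    (hp : p.Prime) (hpm : ¬ p ∣ m) (ρ : ℤ) (hρ : (p : ℤ) ∣ ρ ^ 2 - (m : ℤ))
    (hσ : (m : ℤ) ∣ (p : ℤ) + 1) :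
    ∃ x y z : ℤ, ¬(x = 0 ∧ y = 0 ∧ z = 0) ∧
      (x ^ 2 + p * y ^ 2 - m * z ^ 2 = 0 ∨ x ^ 2 + p * y ^ 2 - m * z ^ 2 = p * m) := by
  haveI : NeZero m := ⟨by omega⟩
  haveI : NeZero p := ⟨hp.pos.ne'⟩
  set A := Nat.sqrt (p * m) + 1 with hA
  set B := Nat.sqrt m + 1 with hB
  set C := Nat.sqrt p + 1 with hC
  set S : Finset (ℕ × ℕ × ℕ) := Finset.range A ×ˢ Finset.range B ×ˢ Finset.range C with hS
  have hcardS : S.card = A * B * C := by simp [hS, Finset.card_product, mul_assoc]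
  have hcard : Fintype.card (ZMod m × ZMod p) < S.card := by
    rw [hcardS]
    have h1 : p * m < A ^ 2 := Nat.lt_succ_sqrt' (p * m)
    have h2 : m < B ^ 2 := Nat.lt_succ_sqrt' m
    have h3 : p < C ^ 2 := Nat.lt_succ_sqrt' p
    have hsq : (m * p) ^ 2 < (A * B * C) ^ 2 := by
      calc (m * p) ^ 2 = (p * m) * m * p := by ring
        _ < A ^ 2 * B ^ 2 * C ^ 2 := by
            apply Nat.mul_lt_mul_of_lt_of_le
            · exact Nat.mul_lt_mul_of_lt_of_le h1 h2.le (by positivity)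
            · exact h3.le
            · positivity
        _ = (A * B * C) ^ 2 := by ring
    have hlt : m * p < A * B * C := by
      by_contra hcon
      push_neg at hcon
      exact absurd (Nat.pow_le_pow_left hcon 2) (by omega)
    simpa [ZMod.card] using hlt
  set F : ℕ × ℕ × ℕ → ZMod m × ZMod p :=
    fun w => (((w.1 : ZMod m) - (w.2.1 : ZMod m)), ((w.1 : ZMod p) - ρ * (w.2.2 : ZMod p))) with hF
  obtain ⟨a, haS, b, hbS, hab, hfab⟩ :=
    Finset.exists_ne_map_eq_of_card_lt_of_maps_to (t := (Finset.univ : Finset (ZMod m × ZMod p)))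
      (by simpa using hcard) (fun w _ => Finset.mem_univ (F w))
  simp only [hS, Finset.mem_product, Finset.mem_range] at haS hbS
  obtain ⟨ha1, ha2, ha3⟩ := haS
  obtain ⟨hb1, hb2, hb3⟩ := hbS
  obtain ⟨x, hx⟩ : ∃ x : ℤ, x = (a.1 : ℤ) - b.1 := ⟨_, rfl⟩
  obtain ⟨y, hy⟩ : ∃ y : ℤ, y = (a.2.1 : ℤ) - b.2.1 := ⟨_, rfl⟩
  obtain ⟨z, hz⟩ : ∃ z : ℤ, z = (a.2.2 : ℤ) - b.2.2 := ⟨_, rfl⟩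
  refine ⟨x, y, z, ?_, ?_⟩
  · rintro ⟨h1, h2, h3⟩
    rw [hx] at h1; rw [hy] at h2; rw [hz] at h3
    apply hab
    have e1 : a.1 = b.1 := by exact_mod_cast sub_eq_zero.mp h1
    have e2 : a.2.1 = b.2.1 := by exact_mod_cast sub_eq_zero.mp h2
    have e3 : a.2.2 = b.2.2 := by exact_mod_cast sub_eq_zero.mp h3
    exact Prod.ext e1 (Prod.ext e2 e3)
  -- congruences
  have hfab1 := congrArg Prod.fst hfab
  have hfab2 := congrArg Prod.snd hfab
  simp only [hF] at hfab1 hfab2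
  have hdm : (m : ℤ) ∣ x - y := by
    rw [← ZMod.intCast_zmod_eq_zero_iff_dvd, hx, hy]
    push_cast
    linear_combination hfab1
  have hdp : (p : ℤ) ∣ x - ρ * z := by
    rw [← ZMod.intCast_zmod_eq_zero_iff_dvd, hx, hz]
    push_cast
    linear_combination hfab2
  obtain ⟨Q, hQ⟩ : ∃ Q : ℤ, Q = x ^ 2 + (p : ℤ) * y ^ 2 - (m : ℤ) * z ^ 2 := ⟨_, rfl⟩
  rw [← hQ]
  have hQm : (m : ℤ) ∣ Q := by
    obtain ⟨k1, e1⟩ := hdm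
    obtain ⟨k2, e2⟩ := hσ
    exact ⟨k1 * (x + y) + k2 * y ^ 2 - z ^ 2, by rw [hQ]; linear_combination (x + y) * e1 + y ^ 2 * e2⟩
  have hQp : (p : ℤ) ∣ Q := by
    obtain ⟨k1, e1⟩ := hdp
    obtain ⟨k2, e2⟩ := hρ
    exact ⟨k1 * (x + ρ * z) + k2 * z ^ 2 + y ^ 2, by rw [hQ]; linear_combination (x + ρ * z) * e1 + z ^ 2 * e2⟩
  have hco : IsCoprime (m : ℤ) (p : ℤ) := by
    rw [Int.isCoprime_iff_gcd_eq_one]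
    simpa using (Nat.Coprime.symm ((hp.coprime_iff_not_dvd).mpr hpm))
  have hQpm : ((p : ℤ) * m) ∣ Q := mul_comm (m : ℤ) (p : ℤ) ▸ hco.mul_dvd hQm hQp
  -- bounds
  have hxb : x ^ 2 < (p : ℤ) * m := by
    have h1 : x ^ 2 ≤ ((Nat.sqrt (p * m) : ℤ)) ^ 2 := by
      rw [hx]; apply sq_le_sq' <;> push_cast <;> omega
    have h2 : ((Nat.sqrt (p * m) : ℤ)) ^ 2 ≤ ((p * m : ℕ) : ℤ) := by
      exact_mod_cast Nat.sqrt_le' (p * m)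
    have h3 := pm_not_sq hp hpm x
    push_cast at h2 h3 ⊢
    omega
  have hyb : y ^ 2 < (m : ℤ) := by
    have h1 : y ^ 2 ≤ ((Nat.sqrt m : ℤ)) ^ 2 := by
      rw [hy]; apply sq_le_sq' <;> push_cast <;> omega
    have h2 : ((Nat.sqrt m : ℤ)) ^ 2 ≤ (m : ℤ) := by exact_mod_cast Nat.sqrt_le' m
    have h3 := sf_not_sq hmsf hm2 y
    omega
  have hzb : z ^ 2 < (p : ℤ) := by
    have h1 : z ^ 2 ≤ ((Nat.sqrt p : ℤ)) ^ 2 := by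
      rw [hz]; apply sq_le_sq' <;> push_cast <;> omega
    have h2 : ((Nat.sqrt p : ℤ)) ^ 2 ≤ (p : ℤ) := by exact_mod_cast Nat.sqrt_le' p
    have h3 := p_not_sq hp z
    omega
  have hppos : (0 : ℤ) < p := by exact_mod_cast hp.pos
  have hmpos : (0 : ℤ) < m := by exact_mod_cast (by omega : 0 < m)
  have hQub : Q < 2 * ((p : ℤ) * m) := by
    have h4 : (p : ℤ) * y ^ 2 < (p : ℤ) * m := mul_lt_mul_of_pos_left hyb hppos
    have h5 : (0:ℤ) ≤ (m : ℤ) * z ^ 2 := by positivity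
    rw [hQ]; linarith
  have hQlb : -((p : ℤ) * m) < Q := by
    have h4 : (m : ℤ) * z ^ 2 < (m : ℤ) * p := mul_lt_mul_of_pos_left hzb hmpos
    have h5 : (0:ℤ) ≤ (p : ℤ) * y ^ 2 := by positivity
    have h6 : (0:ℤ) ≤ x ^ 2 := sq_nonneg x
    rw [hQ]; linarith
  obtain ⟨k, hk⟩ := hQpm
  have hpm0 : (0 : ℤ) < p * m := by positivity
  have hk0 : k = 0 ∨ k = 1 := by
    have h1 : (-1 : ℤ) < k :=
      lt_of_mul_lt_mul_left (a := (p : ℤ) * m) (by linarith) (le_of_lt hpm0)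
    have h2 : k < 2 :=
      lt_of_mul_lt_mul_left (a := (p : ℤ) * m) (by linarith) (le_of_lt hpm0)
    omega
  rcases hk0 with rfl | rfl
  · left; linarith [hk]
  · right; push_cast; linarith [hk]


lemma rep_from_sol (m p : ℕ) (hp0 : 0 < p) (x y z : ℤ)
    (hnz : ¬(x = 0 ∧ y = 0 ∧ z = 0))
    (h : x ^ 2 + p * y ^ 2 - m * z ^ 2 = 0 ∨ x ^ 2 + p * y ^ 2 - m * z ^ 2 = p * m) :
    ∃ d e : ℚ, (m : ℚ) = d ^ 2 + p * e ^ 2 := by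
  rcases h with h | h
  · -- x² + p y² = m z², z ≠ 0
    have hz : z ≠ 0 := by
      rintro rfl
      have hx2 : (0:ℤ) ≤ x ^ 2 := sq_nonneg x
      have hy2 : (0:ℤ) ≤ y ^ 2 := sq_nonneg y
      have hp' : (0:ℤ) < p := by exact_mod_cast hp0
      have hx0 : x = 0 := by nlinarith
      have hy0 : y = 0 := by nlinarith
      exact hnz ⟨hx0, hy0, rfl⟩
    have hzQ : (z : ℚ) ≠ 0 := Int.cast_ne_zero.mpr hz
    have hcast : (x : ℚ) ^ 2 + p * (y : ℚ) ^ 2 - m * (z : ℚ) ^ 2 = 0 := by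
      exact_mod_cast congrArg (fun t : ℤ => (t : ℚ)) h
    refine ⟨x / z, y / z, ?_⟩
    field_simp
    linear_combination (-1 : ℚ) * hcast
  · have hw : ((z : ℚ) ^ 2 + p) ≠ 0 := by positivity
    have hcast : (x : ℚ) ^ 2 + p * (y : ℚ) ^ 2 - m * (z : ℚ) ^ 2 = p * m := by
      exact_mod_cast congrArg (fun t : ℤ => (t : ℚ)) h
    refine ⟨((x : ℚ) * z - p * y) / ((z : ℚ) ^ 2 + p), ((y : ℚ) * z + x) / ((z : ℚ) ^ 2 + p), ?_⟩
    field_simp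
    linear_combination (-(z:ℚ)^2 - (p:ℚ)) * hcast

lemma three_sq_from_rep (m p : ℕ) (hp : p.Prime) (hp4 : p % 4 = 1)
    (h : ∃ d e : ℚ, (m : ℚ) = d ^ 2 + p * e ^ 2) :
    ∃ a b c : ℚ, a ^ 2 + b ^ 2 + c ^ 2 = (m : ℚ) := by
  obtain ⟨d, e, hde⟩ := h
  haveI : Fact p.Prime := ⟨hp⟩
  obtain ⟨u, v, huv⟩ := Nat.Prime.sq_add_sq (p := p) (by omega : p % 4 ≠ 3)
  have hpq : (p : ℚ) = (u : ℚ) ^ 2 + (v : ℚ) ^ 2 := by exact_mod_cast huv.symm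
  exact ⟨d, u * e, v * e, by rw [hde, hpq]; ring⟩

lemma exists_special_prime (m' : ℕ) (hm' : Odd m') (δ : ℕ) (hδ : δ = 1 ∨ δ = 5) (N : ℕ) :
    ∃ p : ℕ, p.Prime ∧ N < p ∧ p % 8 = δ ∧ ((m' : ℤ) ∣ (p : ℤ) + 1) := by
  have hm0 : m' ≠ 0 := by rintro rfl; exact (Nat.not_odd_iff_even.mpr Even.zero) hm'
  have h2 : Nat.Coprime 2 m' := Nat.coprime_two_left.mpr hm'
  have hco : Nat.Coprime 8 m' := by
    have := Nat.Coprime.pow_left 3 h2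
    norm_num at this
    exact this
  haveI : NeZero (8 * m') := ⟨by positivity⟩
  set E := ZMod.chineseRemainder hco with hE
  set a : ZMod (8 * m') := E.symm ((δ : ZMod 8), (-1 : ZMod m')) with ha
  have haU : IsUnit a := by
    have hδu : ((δ : ZMod 8)) * ((δ : ZMod 8)) = 1 := by
      rcases hδ with rfl | rfl <;> decide
    have hpair : IsUnit ((δ : ZMod 8), (-1 : ZMod m')) := by
      refine ⟨⟨((δ : ZMod 8), (-1 : ZMod m')), ((δ : ZMod 8), (-1 : ZMod m')), ?_, ?_⟩, rfl⟩ <;>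
        · refine Prod.ext ?_ ?_
          · simpa using hδu
          · simp
    exact (E.symm : ZMod 8 × ZMod m' →+* ZMod (8 * m')).isUnit_map hpair
  obtain ⟨p, hpN, hp, hpa⟩ := Nat.forall_exists_prime_gt_and_eq_mod haU N
  have hEp : E ((p : ZMod (8 * m'))) = ((δ : ZMod 8), (-1 : ZMod m')) := by
    rw [hpa, ha, RingEquiv.apply_symm_apply]
  have h8 : (p : ZMod 8) = ((δ : ℕ) : ZMod 8) := by
    have hcomp := RingHom.ext_zmod
      ((RingHom.fst (ZMod 8) (ZMod m')).comp E.toRingHom)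
      (ZMod.castHom (dvd_mul_right 8 m') (ZMod 8))
    have h1 := RingHom.congr_fun hcomp ((p : ZMod (8 * m')))
    simp only [RingHom.comp_apply, RingEquiv.toRingHom_eq_coe, RingHom.coe_coe] at h1
    rw [hEp] at h1
    simpa using h1.symm
  have hmod8 : p % 8 = δ := by
    have := (ZMod.natCast_eq_natCast_iff p δ 8).mp h8
    have hδ8 : δ % 8 = δ := by omega
    simpa [Nat.ModEq, hδ8] using this
  have hm'' : (p : ZMod m') = -1 := by
    have hcomp := RingHom.ext_zmod
      ((RingHom.snd (ZMod 8) (ZMod m')).comp E.toRingHom)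
      (ZMod.castHom (dvd_mul_left m' 8) (ZMod m'))
    have h1 := RingHom.congr_fun hcomp ((p : ZMod (8 * m')))
    simp only [RingHom.comp_apply, RingEquiv.toRingHom_eq_coe, RingHom.coe_coe] at h1
    rw [hEp] at h1
    simpa using h1.symm
  have hdvd : (m' : ℤ) ∣ (p : ℤ) + 1 := by
    rw [← ZMod.intCast_zmod_eq_zero_iff_dvd]
    push_cast
    rw [hm'']
    ring
  exact ⟨p, hp, hpN, hmod8, hdvd⟩


/-- From a prime `p` with the right properties, conclude. -/
lemma conclude (m p : ℕ) (hm2 : 2 ≤ m) (hmsf : Squarefree m) (hp : p.Prime)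
    (hp4 : p % 4 = 1) (hpm : ¬ p ∣ m) (hσ : (m : ℤ) ∣ (p : ℤ) + 1)
    [Fact p.Prime]
    (hJ : legendreSym p (m : ℤ) = 1) :
    ∃ a b c : ℚ, a ^ 2 + b ^ 2 + c ^ 2 = (m : ℚ) := by
  have hne : (((m : ℤ) : ZMod p)) ≠ 0 := by
    intro h0
    rw [ZMod.intCast_zmod_eq_zero_iff_dvd] at h0
    exact hpm (by exact_mod_cast h0)
  obtain ⟨r, hr⟩ := (legendreSym.eq_one_iff p hne).mp hJ
  have hm' : ((m : ℕ) : ZMod p) = r * r := by exact_mod_cast hr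
  have hρ : (p : ℤ) ∣ (r.val : ℤ) ^ 2 - (m : ℤ) := by
    rw [← ZMod.intCast_zmod_eq_zero_iff_dvd]
    push_cast
    have hv : ((r.val : ℕ) : ZMod p) = r := by simp [ZMod.natCast_val, ZMod.cast_id]
    rw [hv, hm']
    ring
  obtain ⟨x, y, z, hnz, hsol⟩ := key_pigeonhole m p hm2 hmsf hp hpm _ hρ hσ
  exact three_sq_from_rep m p hp hp4 (rep_from_sol m p hp.pos x y z hnz hsol)

lemma three_sq_odd (m : ℕ) (hmsf : Squarefree m) (hm4 : m % 4 = 1) (hm2 : 2 ≤ m) :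
    ∃ a b c : ℚ, a ^ 2 + b ^ 2 + c ^ 2 = (m : ℚ) := by
  have hmodd : Odd m := Nat.odd_iff.mpr (by omega)
  obtain ⟨p, hp, hpN, hp8, hσ⟩ := exists_special_prime m hmodd 1 (Or.inl rfl) m
  have hpodd : Odd p := Nat.odd_iff.mpr (by omega)
  have hp4 : p % 4 = 1 := by omega
  have hpm : ¬ p ∣ m := fun hd => absurd (Nat.le_of_dvd (by omega) hd) (by omega)
  haveI : Fact p.Prime := ⟨hp⟩
  have hmodeq : (p : ℤ) % (m : ℕ) = (-1 : ℤ) % (m : ℕ) := by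
    have : (p : ℤ) ≡ -1 [ZMOD (m : ℕ)] :=
      (Int.modEq_iff_dvd).mpr (by rw [show (-1 : ℤ) - p = -((p : ℤ) + 1) by ring]; exact dvd_neg.mpr hσ)
    exact this
  have hJ : legendreSym p (m : ℤ) = 1 := by
    rw [jacobiSym.legendreSym.to_jacobiSym]
    calc J((m : ℤ) | p) = J((p : ℤ) | m) := jacobiSym.quadratic_reciprocity_one_mod_four hm4 hpodd
      _ = J(-1 | m) := jacobiSym.mod_left' hmodeq
      _ = ZMod.χ₄ m := jacobiSym.at_neg_one hmodd
      _ = 1 := ZMod.χ₄_nat_one_mod_four hm4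
  exact conclude m p hm2 hmsf hp hp4 hpm hσ hJ

lemma three_sq_even (m' : ℕ) (hmsf : Squarefree (2 * m')) (hm'odd : Odd m') :
    ∃ a b c : ℚ, a ^ 2 + b ^ 2 + c ^ 2 = ((2 * m' : ℕ) : ℚ) := by
  have hm'pos : 1 ≤ m' := by
    rcases Nat.eq_zero_or_pos m' with rfl | h
    · exact absurd hm'odd (by simp)
    · exact h
  set δ : ℕ := if m' % 4 = 1 then 1 else 5 with hδdef
  have hδ : δ = 1 ∨ δ = 5 := by rw [hδdef]; split <;> simp
  obtain ⟨p, hp, hpN, hp8, hσ'⟩ := exists_special_prime m' hm'odd δ hδ (2 * m')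
  have hpodd : Odd p := Nat.odd_iff.mpr (by rcases hδ with h | h <;> omega)
  have hp4 : p % 4 = 1 := by rcases hδ with h | h <;> omega
  have hpm : ¬ p ∣ 2 * m' := fun hd => absurd (Nat.le_of_dvd (by omega) hd) (by omega)
  haveI : Fact p.Prime := ⟨hp⟩
  have hσ : ((2 * m' : ℕ) : ℤ) ∣ (p : ℤ) + 1 := by
    have h2 : (2 : ℤ) ∣ (p : ℤ) + 1 := by
      have : (2 : ℕ) ∣ p + 1 := by
        have := Nat.odd_iff.mp hpodd; omega
      exact_mod_cast Int.natCast_dvd_natCast.mpr this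
    have hco : IsCoprime (2 : ℤ) ((m' : ℕ) : ℤ) := by
      have := Nat.isCoprime_iff_coprime.mpr (Nat.coprime_two_left.mpr hm'odd)
      exact_mod_cast this
    push_cast
    exact hco.mul_dvd h2 hσ'
  have hmodeq : (p : ℤ) % (m' : ℕ) = (-1 : ℤ) % (m' : ℕ) := by
    have : (p : ℤ) ≡ -1 [ZMOD (m' : ℕ)] :=
      (Int.modEq_iff_dvd).mpr (by rw [show (-1 : ℤ) - p = -((p : ℤ) + 1) by ring]; exact dvd_neg.mpr hσ')
    exact this
  have hm'4 : m' % 4 = 1 ∨ m' % 4 = 3 := by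
    have := Nat.odd_iff.mp hm'odd; omega
  have hJ : legendreSym p ((2 * m' : ℕ) : ℤ) = 1 := by
    rw [jacobiSym.legendreSym.to_jacobiSym]
    have hsplit : J(((2 * m' : ℕ) : ℤ) | p) = J(2 | p) * J((m' : ℤ) | p) := by
      rw [show ((2 * m' : ℕ) : ℤ) = 2 * (m' : ℤ) by push_cast; ring]
      exact jacobiSym.mul_left 2 (m' : ℤ) p
    have h2val : J(2 | p) = ZMod.χ₈ p := jacobiSym.at_two hpodd
    have hm'val : J((m' : ℤ) | p) = ZMod.χ₄ m' := by
      calc J((m' : ℤ) | p) = J((p : ℤ) | m') :=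
            jacobiSym.quadratic_reciprocity_one_mod_four' hm'odd hp4
        _ = J(-1 | m') := jacobiSym.mod_left' hmodeq
        _ = ZMod.χ₄ m' := jacobiSym.at_neg_one hm'odd
    rw [hsplit, h2val, hm'val]
    rw [ZMod.χ₈_nat_mod_eight, hp8, ZMod.χ₄_nat_mod_four]
    rcases hm'4 with h | h
    · rw [h]
      have : δ = 1 := by rw [hδdef]; simp [h]
      rw [this]; decide
    · rw [h]
      have : δ = 5 := by rw [hδdef]; simp [h]
      rw [this]; decide
  exact conclude (2 * m') p (by omega) hmsf hp hp4 hpm hσ hJ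


lemma three_sq_sqfree (m : ℕ) (hmsf : Squarefree m) (h4 : m % 4 = 1 ∨ m % 4 = 2) :
    ∃ a b c : ℚ, a ^ 2 + b ^ 2 + c ^ 2 = (m : ℚ) := by
  rcases h4 with h | h
  · by_cases hm1 : m = 1
    · exact ⟨1, 0, 0, by rw [hm1]; norm_num⟩
    · exact three_sq_odd m hmsf h (by omega)
  · have hm2 : m = 2 * (m / 2) := by omega
    have hodd : Odd (m / 2) := Nat.odd_iff.mpr (by omega)
    rw [hm2] at hmsf ⊢
    exact three_sq_even (m / 2) hmsf hodd

lemma pos_rat_sum_three_squares (q : ℚ) (hq : 0 < q) :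
    ∃ a b c : ℚ, a ^ 2 + b ^ 2 + c ^ 2 = q ∨ a ^ 2 + b ^ 2 + c ^ 2 = 2 * q := by
  have hnum : 0 < q.num := Rat.num_pos.mpr hq
  set n : ℕ := q.num.natAbs * q.den with hn
  have hden0 : ((q.den : ℚ)) ≠ 0 := Nat.cast_ne_zero.mpr q.den_nz
  have hq_eq : q = (n : ℚ) / (q.den : ℚ) ^ 2 := by
    have h1 : q = (q.num : ℚ) / (q.den : ℚ) := (Rat.num_div_den q).symm
    rw [hn]
    push_cast
    rw [Nat.cast_natAbs, abs_of_pos hnum]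
    nth_rewrite 1 [h1]
    rw [div_eq_div_iff hden0 (pow_ne_zero 2 hden0)]
    ring
  obtain ⟨m, s, hsm, hmsf⟩ := Nat.sq_mul_squarefree n
  have hn0 : n ≠ 0 :=
    Nat.mul_ne_zero (Int.natAbs_ne_zero.mpr hnum.ne') q.den_nz
  have hs0 : s ≠ 0 := by rintro rfl; simp at hsm; omega
  have hm0 : m ≠ 0 := by rintro rfl; simp at hsm; omega
  set k : ℚ := (s : ℚ) / (q.den : ℚ) with hk
  have hq_eq2 : q = (m : ℚ) * k ^ 2 := by
    rw [hq_eq, hk, ← hsm]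
    push_cast
    field_simp
  have h4 : m % 4 = 1 ∨ m % 4 = 2 ∨ m % 4 = 3 := by
    have : ¬ (4 ∣ m) := by
      intro hdvd
      have : ¬ IsUnit (2 : ℕ) := by decide
      exact this (hmsf 2 (by omega))
    omega
  rcases h4 with h | h | h
  · obtain ⟨a, b, c, habc⟩ := three_sq_sqfree m hmsf (Or.inl h)
    exact ⟨a * k, b * k, c * k, Or.inl (by rw [hq_eq2, ← habc]; ring)⟩
  · obtain ⟨a, b, c, habc⟩ := three_sq_sqfree m hmsf (Or.inr h)
    exact ⟨a * k, b * k, c * k, Or.inl (by rw [hq_eq2, ← habc]; ring)⟩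
  · have hmodd : Odd m := Nat.odd_iff.mpr (by omega)
    have hsf2 : Squarefree (2 * m) := by
      rw [Nat.squarefree_mul_iff]
      exact ⟨Nat.coprime_two_left.mpr hmodd, Nat.prime_two.squarefree, hmsf⟩
    have h42 : (2 * m) % 4 = 2 := by omega
    obtain ⟨a, b, c, habc⟩ := three_sq_sqfree (2 * m) hsf2 (Or.inr h42)
    refine ⟨a * k, b * k, c * k, Or.inr ?_⟩
    rw [hq_eq2]
    push_cast at habc ⊢
    nlinarith [habc]

lemma exists_V (u : ℚ) (hu : 0 < u) :
    ∃ a b c : ℚ, (1 - u * (a ^ 2 + b ^ 2 + c ^ 2)) * (1 - 2 * u * (a ^ 2 + b ^ 2 + c ^ 2)) = 0 := by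
  obtain ⟨a, b, c, h⟩ := pos_rat_sum_three_squares (1 / (2 * u)) (by positivity)
  refine ⟨a, b, c, mul_eq_zero.mpr ?_⟩
  rcases h with h | h
  · right
    rw [h]
    field_simp
    ring
  · left
    rw [h]
    field_simp
    ring

theorem boolean_elim_E3d_over_Q (d e f : ℕ) (hd : 0 < d) (he : 0 < e) (hf : 0 < f)
    (t : Fin d → Fin e → ℚ) (u : Fin d → Fin f → ℚ) :
    (∀ i : Fin d, (∃ j : Fin e, t i j = 0) ∨ (∃ k : Fin f, u i k > 0)) ↔
    (∃ v : Fin d → Fin 3 → ℚ,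
      ∑ i : Fin d,
        ((∏ j : Fin e, t i j) *
          (∏ k : Fin f,
            (1 - u i k * ((v i 0) ^ 2 + (v i 1) ^ 2 + (v i 2) ^ 2)) *
              (1 - 2 * u i k * ((v i 0) ^ 2 + (v i 1) ^ 2 + (v i 2) ^ 2)))) ^ 2 = 0) := by
  constructor
  · intro H
    have key : ∀ i : Fin d, ∃ w : Fin 3 → ℚ,
        ((∏ j : Fin e, t i j) *
          (∏ k : Fin f,
            (1 - u i k * ((w 0) ^ 2 + (w 1) ^ 2 + (w 2) ^ 2)) *
              (1 - 2 * u i k * ((w 0) ^ 2 + (w 1) ^ 2 + (w 2) ^ 2)))) = 0 := by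
      intro i
      rcases H i with ⟨j, hj⟩ | ⟨k, hk⟩
      · exact ⟨0, by rw [Finset.prod_eq_zero (Finset.mem_univ j) hj, zero_mul]⟩
      · obtain ⟨a, b, c, hV⟩ := exists_V (u i k) hk
        refine ⟨![a, b, c], ?_⟩
        rw [Finset.prod_eq_zero (Finset.mem_univ k) (by simpa using hV), mul_zero]
    choose v hv using key
    exact ⟨v, Finset.sum_eq_zero fun i _ => by rw [hv i]; ring⟩
  · rintro ⟨v, hvsum⟩ i
    have hterm := (Finset.sum_eq_zero_iff_of_nonneg (fun i _ => sq_nonneg _)).mp hvsum i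
      (Finset.mem_univ i)
    have h0 : ((∏ j : Fin e, t i j) *
          (∏ k : Fin f,
            (1 - u i k * ((v i 0) ^ 2 + (v i 1) ^ 2 + (v i 2) ^ 2)) *
              (1 - 2 * u i k * ((v i 0) ^ 2 + (v i 1) ^ 2 + (v i 2) ^ 2)))) = 0 :=
      pow_eq_zero_iff (by norm_num) |>.mp hterm
    rcases mul_eq_zero.mp h0 with h1 | h1
    · left
      obtain ⟨j, _, hj⟩ := Finset.prod_eq_zero_iff.mp h1
      exact ⟨j, hj⟩
    · right
      obtain ⟨k, _, hk⟩ := Finset.prod_eq_zero_iff.mp h1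
      refine ⟨k, ?_⟩
      set V : ℚ := (v i 0) ^ 2 + (v i 1) ^ 2 + (v i 2) ^ 2 with hVdef
      have hV0 : 0 ≤ V := by rw [hVdef]; positivity
      rcases mul_eq_zero.mp hk with h2 | h2
      · by_contra hle
        push_neg at hle
        nlinarith
      · by_contra hle
        push_neg at hle
        nlinarith
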